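/- Let D be the truncated discrete Laplace distribution on {0,...,t} with D[u] proportional to exp(-λ|t/2 - u|), and for x ∈ {0,...,m-1} let D_x place mass D[u] at x + um. If x1 + x2 = x1' + x2' (as integers, with all values in {0,...,m-1}), then for every integer z, (D_{x1} * D_{x2})[z] = (D_{x1'} * D_{x2'})[z], where * denotes convolution. -/

import Mathlib

/-- The truncated discrete Laplace weight `D[u] = exp(-λ|t/2 - u|)/Z` on
`u ∈ {0,...,t}`, where `Z` is the normalizing constant. -/
noncomputable def Dmass (lam : ℝ) (t u : ℕ) : ℝ :=
  Real.exp (-lam * |(t : ℝ) / 2 - u|) /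
    ∑ w ∈ Finset.range (t + 1), Real.exp (-lam * |(t : ℝ) / 2 - w|)

/-- `D_x`: the distribution placing mass `D[u]` on `x + u·m` for `u ∈ {0,...,t}`. -/
noncomputable def Dshift (lam : ℝ) (t m x : ℕ) (z : ℤ) : ℝ :=
  ∑ u ∈ Finset.range (t + 1), if z = (x : ℤ) + u * m then Dmass lam t u else 0

/-- Convolution of mass functions on `ℤ`: `(A*B)[z] = ∑_w A[w]·B[z-w]`. -/
noncomputable def convZ (A B : ℤ → ℝ) (z : ℤ) : ℝ := ∑' w : ℤ, A w * B (z - w)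

lemma key (lam : ℝ) (t m x1 x2 : ℕ) (z : ℤ) :
    convZ (Dshift lam t m x1) (Dshift lam t m x2) z
      = ∑ u ∈ Finset.range (t + 1), ∑ v ∈ Finset.range (t + 1),
          if z = ((x1 : ℤ) + x2) + (u + v) * m then Dmass lam t u * Dmass lam t v
          else 0 := by
  unfold convZ
  have h1 : ∀ w : ℤ, Dshift lam t m x1 w * Dshift lam t m x2 (z - w)
      = ∑ u ∈ Finset.range (t + 1),
          if w = (x1 : ℤ) + u * m then Dmass lam t u * Dshift lam t m x2 (z - w)
          else 0 := by
    intro w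
    rw [Dshift, Finset.sum_mul]
    exact Finset.sum_congr rfl fun u _ => by rw [ite_mul, zero_mul]
  rw [tsum_congr h1, Summable.tsum_finsetSum (f := fun (u : ℕ) (w : ℤ) =>
    if w = (x1 : ℤ) + u * m then Dmass lam t u * Dshift lam t m x2 (z - w) else 0)
    (fun u _ => summable_of_ne_finset_zero
    (s := {(x1 : ℤ) + u * m}) (fun w hw => if_neg (by simpa using hw)))]
  refine Finset.sum_congr rfl fun u _ => ?_
  rw [tsum_eq_single ((x1 : ℤ) + u * m) (fun w hw => if_neg hw), if_pos rfl,
    Dshift, Finset.mul_sum]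
  refine Finset.sum_congr rfl fun v _ => ?_
  rw [mul_ite, mul_zero]
  exact if_congr (by constructor <;> intro h <;>
    [linarith [add_mul (u : ℤ) v m]; linarith [add_mul (u : ℤ) v m]]) rfl rfl

/-- if `x1 + x2 = x1' + x2'` as integers (all in `{0,...,m-1}`),
then `(D_{x1} * D_{x2})[z] = (D_{x1'} * D_{x2'})[z]` for every integer `z`. -/
theorem stmt7 (lam : ℝ) (h0 : 0 < lam) (h1 : lam < 1) (t m : ℕ) (hm : 2 ≤ m)
    (x1 x2 x1' x2' : ℕ) (hx1 : x1 < m) (hx2 : x2 < m) (hx1' : x1' < m) (hx2' : x2' < m)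
    (hsum : x1 + x2 = x1' + x2') :
    ∀ z : ℤ, convZ (Dshift lam t m x1) (Dshift lam t m x2) z
      = convZ (Dshift lam t m x1') (Dshift lam t m x2') z := by
  intro z
  have h : ((x1 : ℤ) + x2) = ((x1' : ℤ) + x2') := by exact_mod_cast hsum
  rw [key, key, h]
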